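/- arXiv:quant-ph/0105017 — 2 statements merged into one kernel-verified Lean document; each statement's English description precedes it below -/
import Mathlib

section
/- Let x₁, x₂ ∈ [0, 1] with x₁ + x₂ = 1, let L ∈ ℝ and C > 0, and let g : ℕ → ℝ satisfy |g(k) − L| ≤ C for all k ≥ 1 and g(k) → L as k → ∞. Then (1/n)·∑_{k=0}^{n} (n choose k)·x₁^k·x₂^{n−k}·k·g(k) → x₁·L as n → ∞. -/
open scoped BigOperators Classical ComplexOrder
open Matrix Kronecker Filter

noncomputable section

/-! ### Vectors and states -/

/-- The standard inner product on `ι → ℂ`. -/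
def cdot {ι : Type*} [Fintype ι] (u v : ι → ℂ) : ℂ := ∑ i, star (u i) * v i

/-- A unit vector. -/
def UnitVec {ι : Type*} [Fintype ι] (ψ : ι → ℂ) : Prop := cdot ψ ψ = 1

/-- An orthonormal family of vectors. -/
def OrthonormalFam {κ ι : Type*} [Fintype ι] (χ : κ → ι → ℂ) : Prop :=
  ∀ i j, cdot (χ i) (χ j) = if i = j then 1 else 0

/-- Tensor product of vectors in `C^a` and `C^b`. -/
def tensorVec {a b : ℕ} (u : Fin a → ℂ) (v : Fin b → ℂ) : Fin a × Fin b → ℂ :=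
  fun p => u p.1 * v p.2

/-- The rank-one operator `|ψ⟩⟨ψ|`. -/
def projVec {ι : Type*} (ψ : ι → ℂ) : Matrix ι ι ℂ :=
  Matrix.of fun p q => ψ p * star (ψ q)

/-- A (mixed) quantum state: a positive semidefinite matrix of trace one. -/
def IsState {ι : Type*} [Fintype ι] (ρ : Matrix ι ι ℂ) : Prop :=
  ρ.PosSemidef ∧ ρ.trace = 1

/-- A pure state: a rank-one projection `|ψ⟩⟨ψ|` onto a unit vector. -/
def IsPureState {ι : Type*} [Fintype ι] (ρ : Matrix ι ι ℂ) : Prop :=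
  ∃ ψ : ι → ℂ, UnitVec ψ ∧ ρ = projVec ψ

/-- A separable (disentangled) state: a finite convex combination of product states. -/
def IsSepState {a b : ℕ} (ρ : Matrix (Fin a × Fin b) (Fin a × Fin b) ℂ) : Prop :=
  ∃ (k : ℕ) (r : Fin k → ℝ) (ρA : Fin k → Matrix (Fin a) (Fin a) ℂ)
    (ρB : Fin k → Matrix (Fin b) (Fin b) ℂ),
    (∀ i, 0 ≤ r i) ∧ (∑ i, r i = 1) ∧
    (∀ i, (ρA i).PosSemidef ∧ (ρA i).trace = 1) ∧
    (∀ i, (ρB i).PosSemidef ∧ (ρB i).trace = 1) ∧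
    ρ = ∑ i, r i • (ρA i ⊗ₖ ρB i)

/-! ### Partial trace, Schmidt coefficients, reduced von Neumann entropy -/

/-- Partial trace over the second tensor factor. -/
def ptraceB {a b : ℕ} (ρ : Matrix (Fin a × Fin b) (Fin a × Fin b) ℂ) :
    Matrix (Fin a) (Fin a) ℂ :=
  Matrix.of fun i j => ∑ k : Fin b, ρ (i, k) (j, k)

theorem ptraceB_projVec_isHermitian {a b : ℕ} (ψ : Fin a × Fin b → ℂ) :
    (ptraceB (projVec ψ)).IsHermitian := by
  show (ptraceB (projVec ψ))ᴴ = ptraceB (projVec ψ)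
  ext i j
  simp only [Matrix.conjTranspose_apply, ptraceB, Matrix.of_apply, projVec, star_sum, star_mul',
    star_star]
  exact Finset.sum_congr rfl fun k _ => mul_comm _ _

/-- The Schmidt coefficients of a vector `ψ ∈ C^a ⊗ C^b`: the eigenvalues (with multiplicity)
of the partial trace over the second factor of `|ψ⟩⟨ψ|`. -/
def schmidtCoeffs {a b : ℕ} (ψ : Fin a × Fin b → ℂ) : Fin a → ℝ :=
  (ptraceB_projVec_isHermitian ψ).eigenvalues

/-- The reduced von Neumann entropy of the pure state `|ψ⟩⟨ψ|`. -/
def SvN {a b : ℕ} (ψ : Fin a × Fin b → ℂ) : ℝ :=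
  -∑ i, schmidtCoeffs ψ i * Real.logb 2 (schmidtCoeffs ψ i)

/-- The number of nonzero Schmidt coefficients. -/
def schmidtRank {a b : ℕ} (ψ : Fin a × Fin b → ℂ) : ℕ :=
  (Finset.univ.filter fun i => schmidtCoeffs ψ i ≠ 0).card

/-- The largest Schmidt coefficient. -/
def maxSchmidt {a b : ℕ} (ψ : Fin a × Fin b → ℂ) : ℝ := ⨆ i, schmidtCoeffs ψ i

/-- A representative of the maximally entangled state `P₊^d`: a pure state exactly `d` of whose
Schmidt coefficients are nonzero, all equal to `1/d`. -/
def IsMaxEntRep {a b : ℕ} (d : ℕ) (ρ : Matrix (Fin a × Fin b) (Fin a × Fin b) ℂ) : Prop :=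
  ∃ ψ : Fin a × Fin b → ℂ, UnitVec ψ ∧ ρ = projVec ψ ∧
    (∀ i, schmidtCoeffs ψ i = 0 ∨ schmidtCoeffs ψ i = 1 / d) ∧
    schmidtRank ψ = d

/-- The standard maximally entangled vector `Ψ₊ = (1/√d) ∑ᵢ eᵢ ⊗ eᵢ` on `C^d ⊗ C^d`. -/
def maxEntVec (d : ℕ) : Fin d × Fin d → ℂ :=
  fun p => if p.1 = p.2 then ((1 / Real.sqrt d : ℝ) : ℂ) else 0

/-! ### Trace norm -/

/-- The trace norm of a square complex matrix: the sum of its singular values. -/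
def traceNorm {ι : Type*} [Fintype ι] [DecidableEq ι] (A : Matrix ι ι ℂ) : ℝ :=
  ∑ i, Real.sqrt ((Matrix.posSemidef_conjTranspose_mul_self A).isHermitian.eigenvalues i)

/-! ### Kronecker products of bipartite states, with the canonical local reindexing -/

/-- The canonical regrouping of indices identifying `(C^a⊗C^b)⊗(C^c⊗C^d)` with
`C^{ac}⊗C^{bd}`. -/
def pairEquiv (a b c d : ℕ) : ((Fin a × Fin b) × Fin c × Fin d) ≃ Fin (a * c) × Fin (b * d) :=
  (Equiv.prodProdProdComm (Fin a) (Fin b) (Fin c) (Fin d)).trans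
    (Equiv.prodCongr finProdFinEquiv finProdFinEquiv)

/-- Kronecker product of two bipartite states, regarded (after the canonical local reindexing)
as a state on `C^{ac}⊗C^{bd}`. -/
def stateKron {a b c d : ℕ} (ρ : Matrix (Fin a × Fin b) (Fin a × Fin b) ℂ)
    (σ : Matrix (Fin c × Fin d) (Fin c × Fin d) ℂ) :
    Matrix (Fin (a * c) × Fin (b * d)) (Fin (a * c) × Fin (b * d)) ℂ :=
  Matrix.reindex (pairEquiv a b c d) (pairEquiv a b c d) (ρ ⊗ₖ σ)

/-- The `n`-fold Kronecker power `ρ^{⊗n}` of a bipartite state, regarded (after the canonical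
local reindexing grouping the `n` A-factors and the `n` B-factors) as a state on
`C^{a^n}⊗C^{b^n}`. -/
def statePow {a b : ℕ} (ρ : Matrix (Fin a × Fin b) (Fin a × Fin b) ℂ) :
    (n : ℕ) → Matrix (Fin (a ^ n) × Fin (b ^ n)) (Fin (a ^ n) × Fin (b ^ n)) ℂ
  | 0 => 1
  | n + 1 =>
      Matrix.reindex
        (Equiv.prodCongr (finCongr (pow_succ a n).symm) (finCongr (pow_succ b n).symm))
        (Equiv.prodCongr (finCongr (pow_succ a n).symm) (finCongr (pow_succ b n).symm))
        (stateKron (statePow ρ n) ρ)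

/-! ### LQCC operations -/

/-- The data of an LQCC protocol from `C^a⊗C^b` to `C^{a'}⊗C^{b'}`: `n ≥ 1` rounds; intermediate
local dimensions; at step `2k` Alice applies operators `V k`, at step `2k+1` Bob applies
operators `W k`, each labelled by a classical outcome and allowed to depend on all outcomes
obtained so far, and each family summing (over its own outcome) to the identity. -/
structure LQCCProtocol (a b a' b' : ℕ) where
  n : ℕ
  npos : 0 < n
  adim : ℕ → ℕ
  bdim : ℕ → ℕ
  ha0 : adim 0 = a
  hb0 : bdim 0 = b
  han : adim n = a'
  hbn : bdim n = b'
  /-- the number of classical outcomes at each of the `2n` steps -/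
  K : Fin (2 * n) → ℕ
  V : ∀ k : ℕ, (∀ s : Fin (2 * n), Fin (K s)) →
      Matrix (Fin (adim (k + 1))) (Fin (adim k)) ℂ
  W : ∀ k : ℕ, (∀ s : Fin (2 * n), Fin (K s)) →
      Matrix (Fin (bdim (k + 1))) (Fin (bdim k)) ℂ
  /-- Alice's round-`k` operator depends only on the outcomes of steps `≤ 2k`. -/
  hVdep : ∀ (k : ℕ) (i i' : ∀ s : Fin (2 * n), Fin (K s)),
      (∀ s : Fin (2 * n), (s : ℕ) ≤ 2 * k → i s = i' s) → V k i = V k i'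
  /-- Bob's round-`k` operator depends only on the outcomes of steps `≤ 2k+1`. -/
  hWdep : ∀ (k : ℕ) (i i' : ∀ s : Fin (2 * n), Fin (K s)),
      (∀ s : Fin (2 * n), (s : ℕ) ≤ 2 * k + 1 → i s = i' s) → W k i = W k i'
  hVnorm : ∀ (k : ℕ) (hk : k < n) (i : ∀ s : Fin (2 * n), Fin (K s)),
      ∑ j : Fin (K ⟨2 * k, by omega⟩),
        (V k (Function.update i ⟨2 * k, by omega⟩ j))ᴴ *
          V k (Function.update i ⟨2 * k, by omega⟩ j) = 1
  hWnorm : ∀ (k : ℕ) (hk : k < n) (i : ∀ s : Fin (2 * n), Fin (K s)),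
      ∑ j : Fin (K ⟨2 * k + 1, by omega⟩),
        (W k (Function.update i ⟨2 * k + 1, by omega⟩ j))ᴴ *
          W k (Function.update i ⟨2 * k + 1, by omega⟩ j) = 1

namespace LQCCProtocol

variable {a b a' b' : ℕ} (P : LQCCProtocol a b a' b')

/-- The type of full classical outcome histories of a protocol. -/
abbrev Hist : Type := ∀ s : Fin (2 * P.n), Fin (P.K s)

/-- The product `(1⊗W_{k-1})(V_{k-1}⊗1)⋯(1⊗W₀)(V₀⊗1)` of the first `k` rounds of operators,
for a given outcome history. -/
def partialOp (i : P.Hist) :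
    (k : ℕ) → Matrix (Fin (P.adim k) × Fin (P.bdim k)) (Fin (P.adim 0) × Fin (P.bdim 0)) ℂ
  | 0 => 1
  | k + 1 =>
      (((1 : Matrix (Fin (P.adim (k + 1))) (Fin (P.adim (k + 1))) ℂ) ⊗ₖ P.W k i) *
        (P.V k i ⊗ₖ (1 : Matrix (Fin (P.bdim k)) (Fin (P.bdim k)) ℂ))) *
        partialOp i k

/-- The total Kraus operator `V_{i₁…i_{2n}}` of a protocol for a given outcome history. -/
def totalOp (i : P.Hist) : Matrix (Fin a' × Fin b') (Fin a × Fin b) ℂ :=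
  Matrix.reindex (Equiv.prodCongr (finCongr P.han) (finCongr P.hbn))
    (Equiv.prodCongr (finCongr P.ha0) (finCongr P.hb0)) (P.partialOp i P.n)

end LQCCProtocol

/-- A map on matrices is an LQCC operation if it is implemented by some LQCC protocol:
`Λ(σ) = ∑ᵢ Vᵢ σ Vᵢᴴ` over all outcome histories `i`. -/
def IsLQCC {a b a' b' : ℕ}
    (Λ : Matrix (Fin a × Fin b) (Fin a × Fin b) ℂ →
      Matrix (Fin a' × Fin b') (Fin a' × Fin b') ℂ) : Prop :=
  ∃ P : LQCCProtocol a b a' b',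
    ∀ σ, Λ σ = ∑ i : P.Hist, P.totalOp i * σ * (P.totalOp i)ᴴ

/-! ### Entanglement measures and the standard conditions -/

/-- A family assigning a real number to every bipartite density matrix, for all dimensions. -/
def EntFun : Type :=
  ∀ (a b : ℕ), Matrix (Fin a × Fin b) (Fin a × Fin b) ℂ → ℝ

/-- Nonnegativity on (mixed) states. -/
def MixedNonneg (E : EntFun) : Prop :=
  ∀ (a b : ℕ) (ρ : Matrix (Fin a × Fin b) (Fin a × Fin b) ℂ), IsState ρ → 0 ≤ E a b ρ

/-- Nonnegativity on pure states. -/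
def PureNonneg (E : EntFun) : Prop :=
  ∀ (a b : ℕ) (ψ : Fin a × Fin b → ℂ), UnitVec ψ → 0 ≤ E a b (projVec ψ)

/-- Invariance under conjugation by local unitaries, on states. -/
def MixedLocalUnitaryInv (E : EntFun) : Prop :=
  ∀ (a b : ℕ) (ρ : Matrix (Fin a × Fin b) (Fin a × Fin b) ℂ), IsState ρ →
    ∀ (U : Matrix (Fin a) (Fin a) ℂ) (V : Matrix (Fin b) (Fin b) ℂ),
      U ∈ Matrix.unitaryGroup (Fin a) ℂ → V ∈ Matrix.unitaryGroup (Fin b) ℂ →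
      E a b ((U ⊗ₖ V) * ρ * (U ⊗ₖ V)ᴴ) = E a b ρ

/-- Invariance under conjugation by local unitaries, on pure states. -/
def PureLocalUnitaryInv (E : EntFun) : Prop :=
  ∀ (a b : ℕ) (ρ : Matrix (Fin a × Fin b) (Fin a × Fin b) ℂ), IsPureState ρ →
    ∀ (U : Matrix (Fin a) (Fin a) ℂ) (V : Matrix (Fin b) (Fin b) ℂ),
      U ∈ Matrix.unitaryGroup (Fin a) ℂ → V ∈ Matrix.unitaryGroup (Fin b) ℂ →
      E a b ((U ⊗ₖ V) * ρ * (U ⊗ₖ V)ᴴ) = E a b ρ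

/-- (E0): separable states have zero entanglement. -/
def CondE0 (E : EntFun) : Prop :=
  ∀ (a b : ℕ) (ρ : Matrix (Fin a × Fin b) (Fin a × Fin b) ℂ), IsState ρ → IsSepState ρ →
    E a b ρ = 0

/-- (E1)=(P1): normalization on representatives of the maximally entangled states. -/
def CondE1 (E : EntFun) : Prop :=
  ∀ (a b d : ℕ), 1 ≤ d → ∀ P : Matrix (Fin a × Fin b) (Fin a × Fin b) ℂ,
    IsMaxEntRep d P → E a b P = Real.logb 2 d

/-- (E2): monotonicity under LQCC operations. -/
def CondE2 (E : EntFun) : Prop :=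
  ∀ (a b a' b' : ℕ)
    (Λ : Matrix (Fin a × Fin b) (Fin a × Fin b) ℂ →
      Matrix (Fin a' × Fin b') (Fin a' × Fin b') ℂ)
    (σ : Matrix (Fin a × Fin b) (Fin a × Fin b) ℂ),
    IsState σ → IsLQCC Λ → E a' b' (Λ σ) ≤ E a b σ

/-- (E3): asymptotic continuity. -/
def CondE3 (E : EntFun) : Prop :=
  ∀ (A B : ℕ → ℕ) (ρ σ : ∀ n : ℕ, Matrix (Fin (A n) × Fin (B n)) (Fin (A n) × Fin (B n)) ℂ),
    (∀ n, IsState (ρ n)) → (∀ n, IsState (σ n)) →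
    Tendsto (fun n => traceNorm (ρ n - σ n)) atTop (nhds 0) →
    Tendsto (fun n =>
      (E (A n) (B n) (ρ n) - E (A n) (B n) (σ n)) / (1 + Real.logb 2 ((A n : ℝ) * (B n : ℝ))))
      atTop (nhds 0)

/-- (E3'): asymptotic continuity, where the first sequence consists of pure states. -/
def CondE3' (E : EntFun) : Prop :=
  ∀ (A B : ℕ → ℕ) (ρ σ : ∀ n : ℕ, Matrix (Fin (A n) × Fin (B n)) (Fin (A n) × Fin (B n)) ℂ),
    (∀ n, IsPureState (ρ n)) → (∀ n, IsState (σ n)) →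
    Tendsto (fun n => traceNorm (ρ n - σ n)) atTop (nhds 0) →
    Tendsto (fun n =>
      (E (A n) (B n) (ρ n) - E (A n) (B n) (σ n)) / (1 + Real.logb 2 ((A n : ℝ) * (B n : ℝ))))
      atTop (nhds 0)

/-- (E4): additivity. -/
def CondE4 (E : EntFun) : Prop :=
  ∀ (a b : ℕ) (ρ : Matrix (Fin a × Fin b) (Fin a × Fin b) ℂ), IsState ρ →
    ∀ n : ℕ, 1 ≤ n → E (a ^ n) (b ^ n) (statePow ρ n) = n * E a b ρ

/-- (E4'): asymptotic additivity. -/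
def CondE4' (E : EntFun) : Prop :=
  ∀ (a b : ℕ) (ρ : Matrix (Fin a × Fin b) (Fin a × Fin b) ℂ), IsState ρ →
    ∀ ε : ℝ, 0 < ε → ∃ N : ℕ, 0 < N ∧ ∀ n : ℕ, N ≤ n →
      E (a ^ n) (b ^ n) (statePow ρ n) / n - ε ≤ E a b ρ ∧
      E a b ρ ≤ E (a ^ n) (b ^ n) (statePow ρ n) / n + ε

/-- (E5): subadditivity. -/
def CondE5 (E : EntFun) : Prop :=
  ∀ (a b c d : ℕ) (ρ : Matrix (Fin a × Fin b) (Fin a × Fin b) ℂ)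
    (σ : Matrix (Fin c × Fin d) (Fin c × Fin d) ℂ), IsState ρ → IsState σ →
    E (a * c) (b * d) (stateKron ρ σ) ≤ E a b ρ + E c d σ

/-- (E5''): existence of the regularization. -/
def CondE5'' (E : EntFun) : Prop :=
  ∀ (a b : ℕ) (ρ : Matrix (Fin a × Fin b) (Fin a × Fin b) ℂ), IsState ρ →
    ∃ L : ℝ, Tendsto (fun n : ℕ => E (a ^ n) (b ^ n) (statePow ρ n) / n) atTop (nhds L)

/-- (E6): convexity. -/
def CondE6 (E : EntFun) : Prop :=
  ∀ (a b : ℕ) (ρ σ : Matrix (Fin a × Fin b) (Fin a × Fin b) ℂ), IsState ρ → IsState σ →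
    ∀ l : ℝ, 0 ≤ l → l ≤ 1 →
      E a b (l • ρ + (1 - l) • σ) ≤ l * E a b ρ + (1 - l) * E a b σ

/-- (E6'): convexity on finite decompositions into pure states. -/
def CondE6' (E : EntFun) : Prop :=
  ∀ (a b k : ℕ) (p : Fin k → ℝ) (ψ : Fin k → Fin a × Fin b → ℂ),
    (∀ i, 0 ≤ p i) → (∑ i, p i = 1) → (∀ i, UnitVec (ψ i)) →
    E a b (∑ i, p i • projVec (ψ i)) ≤ ∑ i, p i * E a b (projVec (ψ i))

/-- (P0): separable pure states have zero entanglement. -/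
def CondP0 (E : EntFun) : Prop :=
  ∀ (a b : ℕ) (ψA : Fin a → ℂ) (ψB : Fin b → ℂ), UnitVec (tensorVec ψA ψB) →
    E a b (projVec (tensorVec ψA ψB)) = 0

/-- (P1): normalization (same as (E1)). -/
def CondP1 (E : EntFun) : Prop := CondE1 E

/-- (P1'): `E(P₊(C²)) = 1`. -/
def CondP1' (E : EntFun) : Prop := E 2 2 (projVec (maxEntVec 2)) = 1

/-- (P2): monotonicity under LQCC operations mapping pure states to pure states. -/
def CondP2 (E : EntFun) : Prop :=
  ∀ (a b a' b' : ℕ)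
    (Λ : Matrix (Fin a × Fin b) (Fin a × Fin b) ℂ →
      Matrix (Fin a' × Fin b') (Fin a' × Fin b') ℂ)
    (σ : Matrix (Fin a × Fin b) (Fin a × Fin b) ℂ),
    IsPureState σ → IsLQCC Λ → IsPureState (Λ σ) → E a' b' (Λ σ) ≤ E a b σ

/-- (P3): asymptotic continuity on pure states. -/
def CondP3 (E : EntFun) : Prop :=
  ∀ (A B : ℕ → ℕ) (ρ σ : ∀ n : ℕ, Matrix (Fin (A n) × Fin (B n)) (Fin (A n) × Fin (B n)) ℂ),
    (∀ n, IsPureState (ρ n)) → (∀ n, IsPureState (σ n)) →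
    Tendsto (fun n => traceNorm (ρ n - σ n)) atTop (nhds 0) →
    Tendsto (fun n =>
      (E (A n) (B n) (ρ n) - E (A n) (B n) (σ n)) / (1 + Real.logb 2 ((A n : ℝ) * (B n : ℝ))))
      atTop (nhds 0)

/-- (P4): additivity on pure states. -/
def CondP4 (E : EntFun) : Prop :=
  ∀ (a b : ℕ) (ψ : Fin a × Fin b → ℂ), UnitVec ψ →
    ∀ n : ℕ, 1 ≤ n →
      E (a ^ n) (b ^ n) (statePow (projVec ψ) n) = n * E a b (projVec ψ)

/-- (P4'): asymptotic additivity on pure states. -/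
def CondP4' (E : EntFun) : Prop :=
  ∀ (a b : ℕ) (ψ : Fin a × Fin b → ℂ), UnitVec ψ →
    ∀ ε : ℝ, 0 < ε → ∃ N : ℕ, 0 < N ∧ ∀ n : ℕ, N ≤ n →
      E (a ^ n) (b ^ n) (statePow (projVec ψ) n) / n - ε ≤ E a b (projVec ψ) ∧
      E a b (projVec ψ) ≤ E (a ^ n) (b ^ n) (statePow (projVec ψ) n) / n + ε

/-! ### Entanglement of distillation and entanglement cost -/

/-- The distillable entanglement `E_D`. -/
def ED {a b : ℕ} (ρ : Matrix (Fin a × Fin b) (Fin a × Fin b) ℂ) : ℝ :=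
  sSup {r : ℝ |
    ∃ (d : ℕ → ℕ)
      (Λ : ∀ n : ℕ, Matrix (Fin (a ^ n) × Fin (b ^ n)) (Fin (a ^ n) × Fin (b ^ n)) ℂ →
        Matrix (Fin (a ^ n) × Fin (b ^ n)) (Fin (a ^ n) × Fin (b ^ n)) ℂ)
      (P : ∀ n : ℕ, Matrix (Fin (a ^ n) × Fin (b ^ n)) (Fin (a ^ n) × Fin (b ^ n)) ℂ),
      (∀ n, 0 < d n) ∧ (∀ n, IsLQCC (Λ n)) ∧ (∀ n, IsMaxEntRep (d n) (P n)) ∧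
      Tendsto (fun n => traceNorm (P n - Λ n (statePow ρ n))) atTop (nhds 0) ∧
      r = Filter.limsup (fun n : ℕ => Real.logb 2 (d n) / n) atTop}

/-- The entanglement cost `E_C`. -/
def EC {a b : ℕ} (ρ : Matrix (Fin a × Fin b) (Fin a × Fin b) ℂ) : ℝ :=
  sInf {r : ℝ |
    ∃ (d : ℕ → ℕ)
      (Λ : ∀ n : ℕ, Matrix (Fin (d n) × Fin (d n)) (Fin (d n) × Fin (d n)) ℂ →
        Matrix (Fin (a ^ n) × Fin (b ^ n)) (Fin (a ^ n) × Fin (b ^ n)) ℂ)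
      (P : ∀ n : ℕ, Matrix (Fin (d n) × Fin (d n)) (Fin (d n) × Fin (d n)) ℂ),
      (∀ n, 0 < d n) ∧ (∀ n, IsLQCC (Λ n)) ∧ (∀ n, IsMaxEntRep (d n) (P n)) ∧
      Tendsto (fun n => traceNorm (Λ n (P n) - statePow ρ n)) atTop (nhds 0) ∧
      r = Filter.liminf (fun n : ℕ => Real.logb 2 (d n) / n) atTop}


/-! ### Majorization and composition of families of maps -/

/-- For vectors arranged in decreasing order, `MajorizesDesc q p` says that `q` majorizes `p`:
for every `k`, the sum of the `k` largest entries of `q` is at least that of `p`. -/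
def MajorizesDesc {M : ℕ} (q p : Fin M → ℝ) : Prop :=
  ∀ k : ℕ, k ≤ M →
    ∑ i ∈ Finset.univ.filter (fun i : Fin M => (i : ℕ) < k), p i ≤
      ∑ i ∈ Finset.univ.filter (fun i : Fin M => (i : ℕ) < k), q i

/-- `composeFam N f = f 0 ∘ f 1 ∘ ⋯ ∘ f (N-1)` (the identity for `N = 0`). -/
def composeFam {α : Type*} : (N : ℕ) → (Fin N → α → α) → α → α
  | 0, _ => id
  | N + 1, f => f 0 ∘ composeFam N (fun i => f i.succ)

end
/-- The binomial averaging lemma: if `g(k) → L` with `|g(k) − L| ≤ C` for `k ≥ 1`, then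
`(1/n) ∑ₖ (n choose k) x₁^k x₂^{n−k} k g(k) → x₁ L`. -/
theorem binomial_average_tendsto (x₁ x₂ : ℝ) (hx₁ : 0 ≤ x₁ ∧ x₁ ≤ 1) (hx₂ : 0 ≤ x₂ ∧ x₂ ≤ 1)
    (hsum : x₁ + x₂ = 1) (L C : ℝ) (hC : 0 < C) (g : ℕ → ℝ)
    (hbdd : ∀ k : ℕ, 1 ≤ k → |g k - L| ≤ C)
    (hlim : Filter.Tendsto g Filter.atTop (nhds L)) :
    Filter.Tendsto (fun n : ℕ => (1 / (n : ℝ)) *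
        ∑ k ∈ Finset.range (n + 1), (n.choose k : ℝ) * x₁ ^ k * x₂ ^ (n - k) * k * g k)
      Filter.atTop (nhds (x₁ * L)) := by
  have hx2 : x₂ = 1 - x₁ := by linarith
  subst hx2
  have h1 : ∀ n : ℕ, ∑ k ∈ Finset.range (n+1), (n.choose k : ℝ) * x₁^k * (1-x₁)^(n-k) = 1 := by
    intro n
    have := bernsteinPolynomial.sum ℝ n
    apply_fun Polynomial.eval x₁ at this
    simpa [Polynomial.eval_finset_sum, bernsteinPolynomial] using this
  have h2 : ∀ n : ℕ, ∑ k ∈ Finset.range (n+1),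
      (k:ℝ) * ((n.choose k : ℝ) * x₁^k * (1-x₁)^(n-k)) = n * x₁ := by
    intro n
    have := bernsteinPolynomial.sum_smul ℝ n
    apply_fun Polynomial.eval x₁ at this
    simpa [Polynomial.eval_finset_sum, bernsteinPolynomial] using this
  have hq0 : ∀ n k : ℕ, 0 ≤ (n.choose k : ℝ) * x₁^k * (1-x₁)^(n-k) := by
    intro n k
    have := hx₁.1; have := hx₂.1
    positivity
  have hq1 : ∀ n k : ℕ, k ∈ Finset.range (n+1) →
      (n.choose k : ℝ) * x₁^k * (1-x₁)^(n-k) ≤ 1 := by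
    intro n k hk
    calc (n.choose k : ℝ) * x₁^k * (1-x₁)^(n-k)
        ≤ ∑ j ∈ Finset.range (n+1), (n.choose j : ℝ) * x₁^j * (1-x₁)^(n-j) :=
          Finset.single_le_sum (fun j _ => hq0 n j) hk
      _ = 1 := h1 n
  rw [Metric.tendsto_atTop]
  intro ε hε
  rw [Metric.tendsto_atTop] at hlim
  obtain ⟨K₀, hK₀⟩ := hlim (ε/4) (by linarith)
  set K : ℕ := K₀ + 1 with hK
  obtain ⟨M, hM⟩ := exists_nat_gt (2 * (K:ℝ)^2 * C / ε)
  refine ⟨max K M + 1, fun n hn => ?_⟩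
  have hKn : K ≤ n := by have := le_max_left K M; omega
  have hMn : M < n := by have := le_max_right K M; omega
  have hnpos : (0:ℝ) < n := by exact_mod_cast (by omega : 0 < n)
  have hn0 : (n:ℝ) ≠ 0 := ne_of_gt hnpos
  set q : ℕ → ℝ := fun k => (n.choose k : ℝ) * x₁^k * (1-x₁)^(n-k) with hqdef
  set A : ℝ := ∑ k ∈ Finset.range (n+1), q k * k * (g k - L) with hA
  have hsplit : ∑ k ∈ Finset.range (n+1), (n.choose k : ℝ) * x₁^k * (1-x₁)^(n-k) * k * g k
      = A + (n:ℝ) * x₁ * L := by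
    have e1 : ∑ k ∈ Finset.range (n+1), (n.choose k : ℝ) * x₁^k * (1-x₁)^(n-k) * k * g k
        = ∑ k ∈ Finset.range (n+1), (q k * k * (g k - L) + ((k:ℝ) * q k) * L) :=
      Finset.sum_congr rfl (fun k _ => by simp [hqdef]; ring)
    rw [e1, Finset.sum_add_distrib, ← Finset.sum_mul, h2 n]
  have keydist : dist (1 / (n:ℝ) * ∑ k ∈ Finset.range (n + 1),
      (n.choose k : ℝ) * x₁ ^ k * (1-x₁) ^ (n - k) * k * g k) (x₁ * L) = |1/(n:ℝ) * A| := by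
    rw [Real.dist_eq, hsplit]
    congr 1
    field_simp
    ring
  rw [keydist]
  -- bound |A|
  have hsum2 : ∑ k ∈ Finset.range (n+1), |q k * k * (g k - L)|
      = ∑ k ∈ Finset.range K, |q k * k * (g k - L)|
        + ∑ k ∈ Finset.Ico K (n+1), |q k * k * (g k - L)| := by
    rw [Finset.range_eq_Ico, ← Finset.sum_Ico_consecutive _ (Nat.zero_le K) (by omega),
      ← Finset.range_eq_Ico]
  have hbound1 : ∑ k ∈ Finset.range K, |q k * k * (g k - L)| ≤ (K:ℝ) * ((K:ℝ) * C) := by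
    have : ∀ k ∈ Finset.range K, |q k * k * (g k - L)| ≤ (K:ℝ) * C := by
      intro k hk
      rcases Nat.eq_zero_or_pos k with rfl | hk1
      · simp; positivity
      · have hkmem : k ∈ Finset.range (n+1) := by
          simp only [Finset.mem_range] at *; omega
        have hq1' := hq1 n k hkmem
        have hq0' := hq0 n k
        have hgk := hbdd k hk1
        have hkK : (k:ℝ) ≤ (K:ℝ) := by
          exact_mod_cast le_of_lt (Finset.mem_range.mp hk)
        rw [abs_mul, abs_mul, abs_of_nonneg hq0', abs_of_nonneg (by positivity : (0:ℝ) ≤ (k:ℝ))]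
        calc q k * (k:ℝ) * |g k - L| ≤ 1 * (K:ℝ) * C := by
              gcongr
          _ = (K:ℝ) * C := by ring
    calc ∑ k ∈ Finset.range K, |q k * k * (g k - L)|
        ≤ ∑ _k ∈ Finset.range K, (K:ℝ) * C := Finset.sum_le_sum this
      _ = (K:ℝ) * ((K:ℝ) * C) := by
          rw [Finset.sum_const, Finset.card_range, nsmul_eq_mul]
  have hbound2 : ∑ k ∈ Finset.Ico K (n+1), |q k * k * (g k - L)| ≤ ε/4 * ((n:ℝ) * x₁) := by
    have step1 : ∑ k ∈ Finset.Ico K (n+1), |q k * k * (g k - L)|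
        ≤ ∑ k ∈ Finset.Ico K (n+1), (k:ℝ) * q k * (ε/4) := by
      apply Finset.sum_le_sum
      intro k hk
      have hkK : K ≤ k := (Finset.mem_Ico.mp hk).1
      have hglt : |g k - L| ≤ ε/4 := by
        have := hK₀ k (by omega)
        rw [Real.dist_eq] at this
        linarith
      have hq0' := hq0 n k
      rw [abs_mul, abs_mul, abs_of_nonneg hq0', abs_of_nonneg (by positivity : (0:ℝ) ≤ (k:ℝ))]
      calc q k * (k:ℝ) * |g k - L| ≤ q k * (k:ℝ) * (ε/4) := by
            apply mul_le_mul_of_nonneg_left hglt (by positivity)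
        _ = (k:ℝ) * q k * (ε/4) := by ring
    have step2 : ∑ k ∈ Finset.Ico K (n+1), (k:ℝ) * q k * (ε/4)
        ≤ ∑ k ∈ Finset.range (n+1), (k:ℝ) * q k * (ε/4) := by
      apply Finset.sum_le_sum_of_subset_of_nonneg
      · rw [Finset.range_eq_Ico]; exact Finset.Ico_subset_Ico (Nat.zero_le _) le_rfl
      · intro k _ _
        have := hq0 n k
        positivity
    have step3 : ∑ k ∈ Finset.range (n+1), (k:ℝ) * q k * (ε/4) = (n:ℝ) * x₁ * (ε/4) := by
      rw [← Finset.sum_mul, h2 n]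
    linarith
  have habs : |A| ≤ (K:ℝ)^2 * C + ε/4 * (n:ℝ) := by
    have h0 := Finset.abs_sum_le_sum_abs (fun k => q k * k * (g k - L)) (Finset.range (n+1))
    have hx1le : (n:ℝ) * x₁ ≤ (n:ℝ) := by nlinarith [hx₁.2, hnpos]
    have : ε/4 * ((n:ℝ) * x₁) ≤ ε/4 * (n:ℝ) := by nlinarith
    rw [hA]
    calc |∑ k ∈ Finset.range (n+1), q k * k * (g k - L)| ≤ _ := h0
      _ ≤ (K:ℝ) * ((K:ℝ) * C) + ε/4 * ((n:ℝ) * x₁) := by rw [hsum2]; exact add_le_add hbound1 hbound2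
      _ ≤ (K:ℝ)^2 * C + ε/4 * (n:ℝ) := by
          have hKK : (K:ℝ) * ((K:ℝ) * C) = (K:ℝ)^2 * C := by ring
          linarith
  have hKC : 2 * (K:ℝ)^2 * C < (n:ℝ) * ε := by
    rw [div_lt_iff₀ hε] at hM
    have hMn' : (M:ℝ) ≤ (n:ℝ) := by exact_mod_cast le_of_lt hMn
    have := mul_le_mul_of_nonneg_right hMn' (le_of_lt hε)
    linarith
  have hAlt : |A| < 3*ε/4 * (n:ℝ) := by linarith
  rw [abs_mul, abs_of_pos (by positivity : (0:ℝ) < 1/(n:ℝ))]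
  calc 1/(n:ℝ) * |A| < 1/(n:ℝ) * (3*ε/4 * (n:ℝ)) := by
        exact mul_lt_mul_of_pos_left hAlt (by positivity)
    _ = 3*ε/4 := by field_simp
    _ < ε := by linarith
end

section
/- Let E be an entanglement measure satisfying (E5) subadditivity: E(ρ⊗σ) ≤ E(ρ) + E(σ) for all states ρ on C^{a}⊗C^{b} and σ on C^{a'}⊗C^{b'} (where ρ⊗σ is the Kronecker product, regarded after the canonical local reindexing as a state on C^{aa'}⊗C^{bb'}), and (E6) convexity: E(λρ + (1−λ)σ) ≤ λE(ρ) + (1−λ)E(σ) for all states ρ, σ on a common system C^a⊗C^b and all λ ∈ [0,1]. Then for every state ρ the regularization E^∞(ρ) = lim_{n→∞} E(ρ^{⊗n})/n exists, and E^∞ is convex: E^∞(λρ + (1−λ)σ) ≤ λE^∞(ρ) + (1−λ)E^∞(σ) for all states ρ, σ on a common system and all λ ∈ [0,1]. -/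
open scoped BigOperators Classical ComplexOrder
open Matrix Kronecker Filter

noncomputable section AuxEnt

open Matrix Kronecker

/-- Local equivalence of bipartite matrices: equality up to local reindexing. -/
def LocEquiv {p q p' q' : ℕ} (A : Matrix (Fin p × Fin q) (Fin p × Fin q) ℂ)
    (B : Matrix (Fin p' × Fin q') (Fin p' × Fin q') ℂ) : Prop :=
  ∃ (eA : Fin p ≃ Fin p') (eB : Fin q ≃ Fin q'),
    B = Matrix.reindex (eA.prodCongr eB) (eA.prodCongr eB) A

theorem LocEquiv.refl {p q : ℕ} (A : Matrix (Fin p × Fin q) (Fin p × Fin q) ℂ) :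
    LocEquiv A A :=
  ⟨Equiv.refl _, Equiv.refl _, by ext ⟨i, j⟩ ⟨k, l⟩; simp⟩

theorem LocEquiv.symm {p q p' q' : ℕ} {A : Matrix (Fin p × Fin q) (Fin p × Fin q) ℂ}
    {B : Matrix (Fin p' × Fin q') (Fin p' × Fin q') ℂ} (h : LocEquiv A B) : LocEquiv B A := by
  obtain ⟨eA, eB, rfl⟩ := h
  exact ⟨eA.symm, eB.symm, by ext ⟨i, j⟩ ⟨k, l⟩; simp⟩

theorem LocEquiv.trans {p q p' q' p'' q'' : ℕ}
    {A : Matrix (Fin p × Fin q) (Fin p × Fin q) ℂ}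
    {B : Matrix (Fin p' × Fin q') (Fin p' × Fin q') ℂ}
    {C : Matrix (Fin p'' × Fin q'') (Fin p'' × Fin q'') ℂ}
    (h1 : LocEquiv A B) (h2 : LocEquiv B C) : LocEquiv A C := by
  obtain ⟨eA, eB, rfl⟩ := h1
  obtain ⟨fA, fB, rfl⟩ := h2
  exact ⟨eA.trans fA, eB.trans fB, by ext ⟨i, j⟩ ⟨k, l⟩; simp⟩

/-- Entrywise description of `stateKron`. -/
theorem stateKron_apply {a b c d : ℕ} (A : Matrix (Fin a × Fin b) (Fin a × Fin b) ℂ)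
    (B : Matrix (Fin c × Fin d) (Fin c × Fin d) ℂ)
    (x : Fin (a * c)) (y : Fin (b * d)) (x' : Fin (a * c)) (y' : Fin (b * d)) :
    stateKron A B (x, y) (x', y') =
      A ((finProdFinEquiv.symm x).1, (finProdFinEquiv.symm y).1)
        ((finProdFinEquiv.symm x').1, (finProdFinEquiv.symm y').1) *
      B ((finProdFinEquiv.symm x).2, (finProdFinEquiv.symm y).2)
        ((finProdFinEquiv.symm x').2, (finProdFinEquiv.symm y').2) := by
  rfl

def swapFin (a c : ℕ) : Fin (a * c) ≃ Fin (c * a) :=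
  finProdFinEquiv.symm.trans ((Equiv.prodComm _ _).trans finProdFinEquiv)

theorem locEquiv_comm {a b c d : ℕ} (A : Matrix (Fin a × Fin b) (Fin a × Fin b) ℂ)
    (B : Matrix (Fin c × Fin d) (Fin c × Fin d) ℂ) :
    LocEquiv (stateKron A B) (stateKron B A) := by
  refine ⟨swapFin a c, swapFin b d, ?_⟩
  ext ⟨x, y⟩ ⟨x', y'⟩
  rw [Matrix.reindex_apply, Matrix.submatrix_apply]
  simp only [Equiv.prodCongr_symm, Equiv.prodCongr_apply, Prod.map_apply]
  rw [stateKron_apply, stateKron_apply]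
  simp only [swapFin, Equiv.symm_trans_apply, Equiv.symm_symm, Equiv.prodComm_symm,
    Equiv.prodComm_apply, Equiv.symm_apply_apply, Prod.fst_swap, Prod.snd_swap]
  ring
def assocFin (a c e : ℕ) : Fin (a * c * e) ≃ Fin (a * (c * e)) :=
  finProdFinEquiv.symm.trans ((Equiv.prodCongr finProdFinEquiv.symm (Equiv.refl _)).trans
    ((Equiv.prodAssoc _ _ _).trans ((Equiv.prodCongr (Equiv.refl _) finProdFinEquiv).trans
      finProdFinEquiv)))

theorem locEquiv_assoc {a b c d e f : ℕ} (A : Matrix (Fin a × Fin b) (Fin a × Fin b) ℂ)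
    (B : Matrix (Fin c × Fin d) (Fin c × Fin d) ℂ)
    (C : Matrix (Fin e × Fin f) (Fin e × Fin f) ℂ) :
    LocEquiv (stateKron (stateKron A B) C) (stateKron A (stateKron B C)) := by
  refine ⟨assocFin a c e, assocFin b d f, ?_⟩
  ext ⟨x, y⟩ ⟨x', y'⟩
  rw [Matrix.reindex_apply, Matrix.submatrix_apply]
  simp only [Equiv.prodCongr_symm, Equiv.prodCongr_apply, Prod.map_apply]
  rw [stateKron_apply, stateKron_apply, stateKron_apply, stateKron_apply]
  simp only [assocFin, Equiv.symm_trans_apply, Equiv.symm_symm, Equiv.prodCongr_symm,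
    Equiv.prodCongr_apply, Equiv.refl_symm, Equiv.coe_refl, Prod.map_apply, id_eq,
    Equiv.prodAssoc_symm_apply, Equiv.symm_apply_apply, Equiv.prodAssoc_apply,
    Prod.map_fst, Prod.map_snd]
  ring

def congrFin {p p' r r' : ℕ} (e : Fin p ≃ Fin p') (g : Fin r ≃ Fin r') :
    Fin (p * r) ≃ Fin (p' * r') :=
  finProdFinEquiv.symm.trans ((e.prodCongr g).trans finProdFinEquiv)

theorem LocEquiv.kron {a b c d a' b' c' d' : ℕ}
    {A : Matrix (Fin a × Fin b) (Fin a × Fin b) ℂ}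
    {A' : Matrix (Fin a' × Fin b') (Fin a' × Fin b') ℂ}
    {B : Matrix (Fin c × Fin d) (Fin c × Fin d) ℂ}
    {B' : Matrix (Fin c' × Fin d') (Fin c' × Fin d') ℂ}
    (h1 : LocEquiv A A') (h2 : LocEquiv B B') :
    LocEquiv (stateKron A B) (stateKron A' B') := by
  obtain ⟨eA, eB, rfl⟩ := h1
  obtain ⟨fA, fB, rfl⟩ := h2
  refine ⟨congrFin eA fA, congrFin eB fB, ?_⟩
  ext ⟨x, y⟩ ⟨x', y'⟩
  simp only [stateKron_apply, Matrix.reindex_apply, Matrix.submatrix_apply,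
    Equiv.prodCongr_symm, Equiv.prodCongr_apply, Prod.map_apply, Prod.map_fst, Prod.map_snd,
    congrFin, Equiv.symm_trans_apply, Equiv.symm_symm, Equiv.symm_apply_apply, id_eq]

theorem one_fin_apply {p q : ℕ} (hp : p = 1) (hq : q = 1) (u v : Fin p × Fin q) :
    (1 : Matrix (Fin p × Fin q) (Fin p × Fin q) ℂ) u v = 1 := by
  subst hp; subst hq
  rw [Subsingleton.elim u v, Matrix.one_apply_eq]

theorem locEquiv_kron_one_right {p q r s : ℕ} (hr : r = 1) (hs : s = 1)
    (M : Matrix (Fin p × Fin q) (Fin p × Fin q) ℂ) :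
    LocEquiv M (stateKron M (1 : Matrix (Fin r × Fin s) (Fin r × Fin s) ℂ)) := by
  subst hr; subst hs
  refine ⟨(Equiv.prodUnique (Fin p) (Fin 1)).symm.trans finProdFinEquiv,
    (Equiv.prodUnique (Fin q) (Fin 1)).symm.trans finProdFinEquiv, ?_⟩
  ext ⟨x, y⟩ ⟨x', y'⟩
  rw [Matrix.reindex_apply, Matrix.submatrix_apply]
  simp only [Equiv.prodCongr_symm, Equiv.prodCongr_apply, Prod.map_apply]
  rw [stateKron_apply]
  rw [one_fin_apply rfl rfl, mul_one]
  simp [Equiv.prodUnique]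

theorem locEquiv_kron_one_left {p q r s : ℕ} (hr : r = 1) (hs : s = 1)
    (M : Matrix (Fin p × Fin q) (Fin p × Fin q) ℂ) :
    LocEquiv M (stateKron (1 : Matrix (Fin r × Fin s) (Fin r × Fin s) ℂ) M) :=
  (locEquiv_kron_one_right hr hs M).trans
    (locEquiv_comm M (1 : Matrix (Fin r × Fin s) (Fin r × Fin s) ℂ))
theorem perm_mem_unitary {ι : Type*} [Fintype ι] [DecidableEq ι] (g : ι ≃ ι) :
    (1 : Matrix ι ι ℂ).submatrix (⇑g) id ∈ Matrix.unitaryGroup ι ℂ := by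
  rw [Matrix.mem_unitaryGroup_iff, Matrix.star_eq_conjTranspose,
    Matrix.conjTranspose_submatrix, Matrix.conjTranspose_one]
  have h := Matrix.submatrix_mul_equiv (1 : Matrix ι ι ℂ) (1 : Matrix ι ι ℂ)
    (⇑g) (Equiv.refl ι) (⇑g)
  simpa [Matrix.submatrix_one_equiv] using h

theorem kron_one_perm {p q : ℕ} (e : Fin p ≃ Fin p) (f : Fin q ≃ Fin q) :
    ((1 : Matrix (Fin p) (Fin p) ℂ).submatrix (⇑e) id) ⊗ₖ
      ((1 : Matrix (Fin q) (Fin q) ℂ).submatrix (⇑f) id) =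
    (1 : Matrix (Fin p × Fin q) (Fin p × Fin q) ℂ).submatrix (⇑(e.prodCongr f)) id := by
  ext ⟨i, j⟩ ⟨k, l⟩
  simp only [Matrix.kroneckerMap_apply, Matrix.submatrix_apply, Matrix.one_apply, id_eq,
    Equiv.prodCongr_apply, Prod.map_apply, Prod.mk.injEq, ite_and]
  by_cases h1 : e i = k <;> by_cases h2 : f j = l <;> simp [h1, h2]

theorem reindex_eq_conj {p q : ℕ} (e : Fin p ≃ Fin p) (f : Fin q ≃ Fin q)
    (A : Matrix (Fin p × Fin q) (Fin p × Fin q) ℂ) :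
    Matrix.reindex (e.prodCongr f) (e.prodCongr f) A =
      (((1 : Matrix (Fin p) (Fin p) ℂ).submatrix (⇑e.symm) id) ⊗ₖ
        ((1 : Matrix (Fin q) (Fin q) ℂ).submatrix (⇑f.symm) id)) * A *
      (((1 : Matrix (Fin p) (Fin p) ℂ).submatrix (⇑e.symm) id) ⊗ₖ
        ((1 : Matrix (Fin q) (Fin q) ℂ).submatrix (⇑f.symm) id))ᴴ := by
  rw [kron_one_perm]
  have hsymm : (e.symm).prodCongr (f.symm) = (e.prodCongr f).symm := by
    ext ⟨i, j⟩ <;> rfl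
  rw [hsymm, Matrix.conjTranspose_submatrix, Matrix.conjTranspose_one]
  have h1 : (1 : Matrix (Fin p × Fin q) (Fin p × Fin q) ℂ).submatrix
      (⇑(e.prodCongr f).symm) id * A = A.submatrix (⇑(e.prodCongr f).symm) id := by
    have := Matrix.submatrix_mul_equiv (1 : Matrix (Fin p × Fin q) (Fin p × Fin q) ℂ) A
      (⇑(e.prodCongr f).symm) (Equiv.refl _) id
    simpa using this
  have h2 : A.submatrix (⇑(e.prodCongr f).symm) id *
      (1 : Matrix (Fin p × Fin q) (Fin p × Fin q) ℂ).submatrix id (⇑(e.prodCongr f).symm) =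
      A.submatrix (⇑(e.prodCongr f).symm) (⇑(e.prodCongr f).symm) := by
    have := Matrix.submatrix_mul_equiv A (1 : Matrix (Fin p × Fin q) (Fin p × Fin q) ℂ)
      (⇑(e.prodCongr f).symm) (Equiv.refl _) (⇑(e.prodCongr f).symm)
    simpa using this
  rw [h1, h2, Matrix.reindex_apply]

/-- `E` is invariant along local equivalences of states. -/
theorem E_locEquiv (E : EntFun) (hinv : MixedLocalUnitaryInv E) {p q p' q' : ℕ}
    {A : Matrix (Fin p × Fin q) (Fin p × Fin q) ℂ}
    {B : Matrix (Fin p' × Fin q') (Fin p' × Fin q') ℂ}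
    (hA : IsState A) (h : LocEquiv A B) : E p' q' B = E p q A := by
  obtain ⟨eA, eB, rfl⟩ := h
  obtain rfl : p = p' := by simpa using Fintype.card_congr eA
  obtain rfl : q = q' := by simpa using Fintype.card_congr eB
  rw [reindex_eq_conj]
  exact hinv p q A hA _ _ (perm_mem_unitary _) (perm_mem_unitary _)

theorem trace_submatrix_equiv' {ι κ : Type*} [Fintype ι] [Fintype κ] [DecidableEq ι]
    [DecidableEq κ] (s : κ ≃ ι) (A : Matrix ι ι ℂ) :
    (A.submatrix ⇑s ⇑s).trace = A.trace := by
  simp only [Matrix.trace, Matrix.diag, Matrix.submatrix_apply]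
  exact Equiv.sum_comp s fun j => A j j

theorem IsState.locEquiv {p q p' q' : ℕ} {A : Matrix (Fin p × Fin q) (Fin p × Fin q) ℂ}
    {B : Matrix (Fin p' × Fin q') (Fin p' × Fin q') ℂ}
    (hA : IsState A) (h : LocEquiv A B) : IsState B := by
  obtain ⟨eA, eB, rfl⟩ := h
  rw [Matrix.reindex_apply]
  exact ⟨hA.1.submatrix _, by rw [trace_submatrix_equiv' _ _, hA.2]⟩

theorem kron_conjTranspose {γ δ γ' δ' : Type*} (A : Matrix γ δ ℂ) (B : Matrix γ' δ' ℂ) :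
    (A ⊗ₖ B)ᴴ = Aᴴ ⊗ₖ Bᴴ := by
  ext ⟨i, j⟩ ⟨k, l⟩
  simp [Matrix.conjTranspose_apply, star_mul']

theorem posSemidef_kron {ι κ : Type*} [Fintype ι] [Fintype κ] [DecidableEq ι] [DecidableEq κ]
    {A : Matrix ι ι ℂ} {B : Matrix κ κ ℂ} (hA : A.PosSemidef) (hB : B.PosSemidef) :
    (A ⊗ₖ B).PosSemidef := by
  exact Matrix.PosSemidef.kronecker hA hB

theorem IsState.kron {a b c d : ℕ} {A : Matrix (Fin a × Fin b) (Fin a × Fin b) ℂ}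
    {B : Matrix (Fin c × Fin d) (Fin c × Fin d) ℂ} (hA : IsState A) (hB : IsState B) :
    IsState (stateKron A B) := by
  constructor
  · rw [stateKron, Matrix.reindex_apply]
    exact (posSemidef_kron hA.1 hB.1).submatrix _
  · rw [stateKron, Matrix.reindex_apply, trace_submatrix_equiv', Matrix.trace_kronecker,
      hA.2, hB.2, mul_one]

theorem locEquiv_statePow_succ {a b : ℕ} (ρ : Matrix (Fin a × Fin b) (Fin a × Fin b) ℂ)
    (n : ℕ) : LocEquiv (stateKron (statePow ρ n) ρ) (statePow ρ (n + 1)) :=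
  ⟨finCongr (pow_succ a n).symm, finCongr (pow_succ b n).symm, rfl⟩

theorem statePow_zero_eq_one {a b : ℕ} (ρ : Matrix (Fin a × Fin b) (Fin a × Fin b) ℂ) :
    statePow ρ 0 = (1 : Matrix (Fin (a ^ 0) × Fin (b ^ 0)) (Fin (a ^ 0) × Fin (b ^ 0)) ℂ) :=
  rfl

theorem IsState.statePow {a b : ℕ} {ρ : Matrix (Fin a × Fin b) (Fin a × Fin b) ℂ}
    (hρ : IsState ρ) : ∀ n, IsState (statePow ρ n)
  | 0 => ⟨Matrix.PosSemidef.one, by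
      rw [statePow_zero_eq_one, Matrix.trace_one]
      simp⟩
  | n + 1 => (((hρ.statePow n).kron hρ)).locEquiv (locEquiv_statePow_succ ρ n)

theorem locEquiv_statePow_add {a b : ℕ} (ρ : Matrix (Fin a × Fin b) (Fin a × Fin b) ℂ) :
    ∀ m n : ℕ, LocEquiv (stateKron (statePow ρ m) (statePow ρ n)) (statePow ρ (m + n))
  | m, 0 => by
      rw [statePow_zero_eq_one]
      exact (locEquiv_kron_one_right (pow_zero a) (pow_zero b) (statePow ρ m)).symm
  | m, n + 1 => by
      refine LocEquiv.trans ?_ (LocEquiv.trans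
        ((locEquiv_statePow_add ρ m n).kron (LocEquiv.refl ρ)) (locEquiv_statePow_succ ρ (m + n)))
      exact LocEquiv.trans
        ((LocEquiv.refl (statePow ρ m)).kron (locEquiv_statePow_succ ρ n).symm)
        (locEquiv_assoc (statePow ρ m) (statePow ρ n) ρ).symm
theorem posSemidef_real_smul {ι : Type*} [Fintype ι] {M : Matrix ι ι ℂ} (hM : M.PosSemidef)
    {c : ℝ} (hc : 0 ≤ c) : (c • M).PosSemidef := by
  exact Matrix.PosSemidef.smul hM hc

theorem isState_convex {a b : ℕ} {ρ σ : Matrix (Fin a × Fin b) (Fin a × Fin b) ℂ}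
    (hρ : IsState ρ) (hσ : IsState σ) {l : ℝ} (h0 : 0 ≤ l) (h1 : l ≤ 1) :
    IsState (l • ρ + (1 - l) • σ) := by
  constructor
  · exact (posSemidef_real_smul hρ.1 h0).add (posSemidef_real_smul hσ.1 (by linarith))
  · rw [Matrix.trace_add, Matrix.trace_smul, Matrix.trace_smul, hρ.2, hσ.2, Complex.real_smul,
      Complex.real_smul, mul_one, mul_one, ← Complex.ofReal_add]
    norm_num

theorem stateKron_smul {a b c d : ℕ} (A : Matrix (Fin a × Fin b) (Fin a × Fin b) ℂ) (r : ℝ)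
    (B : Matrix (Fin c × Fin d) (Fin c × Fin d) ℂ) :
    stateKron A (r • B) = r • stateKron A B := by
  ext ⟨x, y⟩ ⟨x', y'⟩
  rw [Matrix.smul_apply, stateKron_apply, stateKron_apply, Matrix.smul_apply, mul_smul_comm]

theorem smul_stateKron {a b c d : ℕ} (r : ℝ) (A : Matrix (Fin a × Fin b) (Fin a × Fin b) ℂ)
    (B : Matrix (Fin c × Fin d) (Fin c × Fin d) ℂ) :
    stateKron (r • A) B = r • stateKron A B := by
  ext ⟨x, y⟩ ⟨x', y'⟩
  rw [Matrix.smul_apply, stateKron_apply, stateKron_apply, Matrix.smul_apply, smul_mul_assoc]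

theorem stateKron_add {a b c d : ℕ} (A : Matrix (Fin a × Fin b) (Fin a × Fin b) ℂ)
    (B C : Matrix (Fin c × Fin d) (Fin c × Fin d) ℂ) :
    stateKron A (B + C) = stateKron A B + stateKron A C := by
  ext ⟨x, y⟩ ⟨x', y'⟩
  rw [Matrix.add_apply, stateKron_apply, stateKron_apply, stateKron_apply, Matrix.add_apply,
    mul_add]

theorem add_stateKron {a b c d : ℕ} (A B : Matrix (Fin a × Fin b) (Fin a × Fin b) ℂ)
    (C : Matrix (Fin c × Fin d) (Fin c × Fin d) ℂ) :
    stateKron (A + B) C = stateKron A C + stateKron B C := by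
  ext ⟨x, y⟩ ⟨x', y'⟩
  rw [Matrix.add_apply, stateKron_apply, stateKron_apply, stateKron_apply, Matrix.add_apply,
    add_mul]
end AuxEnt
/-- For an entanglement measure satisfying (E5) subadditivity and (E6) convexity, the
regularization `E^∞(ρ) = lim E(ρ^{⊗n})/n` exists for every state, and `E^∞` is convex. -/
theorem regularization_exists_and_convex (E : EntFun) (hnn : MixedNonneg E)
    (hinv : MixedLocalUnitaryInv E) (hE5 : CondE5 E) (hE6 : CondE6 E) :
    (∀ (a b : ℕ) (ρ : Matrix (Fin a × Fin b) (Fin a × Fin b) ℂ), IsState ρ →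
        ∃ L : ℝ, Filter.Tendsto (fun n : ℕ => E (a ^ n) (b ^ n) (statePow ρ n) / n)
          Filter.atTop (nhds L)) ∧
      (∀ (a b : ℕ) (ρ σ : Matrix (Fin a × Fin b) (Fin a × Fin b) ℂ), IsState ρ → IsState σ →
        ∀ l : ℝ, 0 ≤ l → l ≤ 1 → ∀ Lρ Lσ Lm : ℝ,
          Filter.Tendsto (fun n : ℕ => E (a ^ n) (b ^ n) (statePow ρ n) / n)
            Filter.atTop (nhds Lρ) →
          Filter.Tendsto (fun n : ℕ => E (a ^ n) (b ^ n) (statePow σ n) / n)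
            Filter.atTop (nhds Lσ) →
          Filter.Tendsto (fun n : ℕ =>
              E (a ^ n) (b ^ n) (statePow (l • ρ + (1 - l) • σ) n) / n)
            Filter.atTop (nhds Lm) →
          Lm ≤ l * Lρ + (1 - l) * Lσ) := by
  constructor
  · -- existence of the regularization, by Fekete's subadditive lemma
    intro a b ρ hρ
    have hsub : Subadditive (fun n => E (a ^ n) (b ^ n) (statePow ρ n)) := by
      intro m n
      have h := locEquiv_statePow_add ρ m n
      have he := E_locEquiv E hinv ((hρ.statePow m).kron (hρ.statePow n)) h
      simp only []
      rw [he]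
      exact hE5 _ _ _ _ _ _ (hρ.statePow m) (hρ.statePow n)
    refine ⟨hsub.lim, hsub.tendsto_lim ⟨0, ?_⟩⟩
    rintro x ⟨n, rfl⟩
    exact div_nonneg (hnn _ _ _ (hρ.statePow n)) (Nat.cast_nonneg n)
  · -- convexity of the regularization
    intro a b ρ σ hρ hσ l h0 h1 Lρ Lσ Lm hρt hσt hμt
    set μ := l • ρ + (1 - l) • σ with hμdef
    have hμ : IsState μ := isState_convex hρ hσ h0 h1
    refine le_of_forall_pos_le_add fun ε hε => ?_
    -- affine upper bounds on `E(τ^{⊗n})`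
    have bound : ∀ (τ : Matrix (Fin a × Fin b) (Fin a × Fin b) ℂ), IsState τ →
        ∀ L : ℝ, Filter.Tendsto (fun n : ℕ => E (a ^ n) (b ^ n) (statePow τ n) / n)
          Filter.atTop (nhds L) →
        ∃ C : ℝ, 0 ≤ C ∧ ∀ m : ℕ,
          E (a ^ m) (b ^ m) (statePow τ m) ≤ m * (L + ε) + C := by
      intro τ hτ L hLt
      have hnn' : ∀ n, 0 ≤ E (a ^ n) (b ^ n) (statePow τ n) :=
        fun n => hnn _ _ _ (hτ.statePow n)
      have hL0 : 0 ≤ L := ge_of_tendsto hLt (Filter.Eventually.of_forall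
        fun n => div_nonneg (hnn' n) (Nat.cast_nonneg n))
      have hev : ∀ᶠ n : ℕ in Filter.atTop,
          E (a ^ n) (b ^ n) (statePow τ n) / n < L + ε :=
        hLt.eventually_lt_const (by linarith)
      obtain ⟨N, hN⟩ := Filter.eventually_atTop.mp hev
      refine ⟨∑ i ∈ Finset.range (N + 1), E (a ^ i) (b ^ i) (statePow τ i),
        Finset.sum_nonneg fun i _ => hnn' i, fun m => ?_⟩
      by_cases hm : m ≤ N
      · have hle : E (a ^ m) (b ^ m) (statePow τ m) ≤
            ∑ i ∈ Finset.range (N + 1), E (a ^ i) (b ^ i) (statePow τ i) :=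
          Finset.single_le_sum (fun i _ => hnn' i) (Finset.mem_range.mpr (by omega))
        have hml : (0 : ℝ) ≤ m * (L + ε) := by positivity
        linarith
      · push_neg at hm
        have hmpos : (0 : ℝ) < m := by
          have : 0 < m := by omega
          exact_mod_cast this
        have hlt := hN m (by omega)
        rw [div_lt_iff₀ hmpos] at hlt
        have hC : (0 : ℝ) ≤ ∑ i ∈ Finset.range (N + 1),
            E (a ^ i) (b ^ i) (statePow τ i) := Finset.sum_nonneg fun i _ => hnn' i
        nlinarith
    obtain ⟨Cρ, hCρ0, hfρ⟩ := bound ρ hρ Lρ hρt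
    obtain ⟨Cσ, hCσ0, hfσ⟩ := bound σ hσ Lσ hσt
    set A := Lρ + ε with hAdef
    set B := Lσ + ε with hBdef
    -- the key induction
    have key : ∀ n j k : ℕ,
        E (a ^ n * (a ^ j * a ^ k)) (b ^ n * (b ^ j * b ^ k))
          (stateKron (statePow μ n) (stateKron (statePow ρ j) (statePow σ k))) ≤
        n * (l * A + (1 - l) * B) + j * A + k * B + (Cρ + Cσ) := by
      intro n
      induction n with
      | zero =>
        intro j k
        have hW : IsState (stateKron (statePow ρ j) (statePow σ k)) :=
          (hρ.statePow j).kron (hσ.statePow k)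
        have hLE : LocEquiv (stateKron (statePow ρ j) (statePow σ k))
            (stateKron (statePow μ 0) (stateKron (statePow ρ j) (statePow σ k))) := by
          rw [statePow_zero_eq_one]
          exact locEquiv_kron_one_left (pow_zero a) (pow_zero b) _
        rw [E_locEquiv E hinv hW hLE]
        have h5 := hE5 _ _ _ _ _ _ (hρ.statePow j) (hσ.statePow k)
        have hfj := hfρ j
        have hgk := hfσ k
        push_cast
        linarith
      | succ n ih =>
        intro j k
        set W := stateKron (statePow ρ j) (statePow σ k) with hWdef
        have hWs : IsState W := (hρ.statePow j).kron (hσ.statePow k)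
        set X := stateKron (statePow μ n) (stateKron ρ W) with hXdef
        set Y := stateKron (statePow μ n) (stateKron σ W) with hYdef
        have hmix : stateKron μ W = l • stateKron ρ W + (1 - l) • stateKron σ W := by
          rw [hμdef, add_stateKron, smul_stateKron, smul_stateKron]
        have hZ : stateKron (statePow μ n) (stateKron μ W) = l • X + (1 - l) • Y := by
          rw [hmix, stateKron_add, stateKron_smul, stateKron_smul]
        have hT : LocEquiv (stateKron (statePow μ n) (stateKron μ W))
            (stateKron (statePow μ (n + 1)) W) :=
          (locEquiv_assoc (statePow μ n) μ W).symm.trans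
            ((locEquiv_statePow_succ μ n).kron (LocEquiv.refl W))
        have hZstate : IsState (stateKron (statePow μ n) (stateKron μ W)) :=
          (hμ.statePow n).kron (hμ.kron hWs)
        rw [E_locEquiv E hinv hZstate hT, hZ]
        have hXs : IsState X := (hμ.statePow n).kron (hρ.kron hWs)
        have hYs : IsState Y := (hμ.statePow n).kron (hσ.kron hWs)
        have h6 := hE6 _ _ X Y hXs hYs l h0 h1
        have hXeq : LocEquiv X
            (stateKron (statePow μ n)
              (stateKron (statePow ρ (j + 1)) (statePow σ k))) :=
          (LocEquiv.refl (statePow μ n)).kron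
            ((locEquiv_assoc ρ (statePow ρ j) (statePow σ k)).symm.trans
              (((locEquiv_comm ρ (statePow ρ j)).trans (locEquiv_statePow_succ ρ j)).kron
                (LocEquiv.refl (statePow σ k))))
        have hYeq : LocEquiv Y
            (stateKron (statePow μ n)
              (stateKron (statePow ρ j) (statePow σ (k + 1)))) :=
          (LocEquiv.refl (statePow μ n)).kron
            ((locEquiv_assoc σ (statePow ρ j) (statePow σ k)).symm.trans
              (((locEquiv_comm σ (statePow ρ j)).kron
                  (LocEquiv.refl (statePow σ k))).trans
                ((locEquiv_assoc (statePow ρ j) σ (statePow σ k)).trans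
                  ((LocEquiv.refl (statePow ρ j)).kron
                    ((locEquiv_comm σ (statePow σ k)).trans
                      (locEquiv_statePow_succ σ k))))))
        have hEX := E_locEquiv E hinv hXs hXeq
        have hEY := E_locEquiv E hinv hYs hYeq
        have ihX := ih (j + 1) k
        have ihY := ih j (k + 1)
        rw [hEX] at ihX
        rw [hEY] at ihY
        have hstep : l * (E _ _ X) + (1 - l) * (E _ _ Y) ≤
            l * (↑n * (l * A + (1 - l) * B) + ↑(j + 1) * A + ↑k * B + (Cρ + Cσ)) +
            (1 - l) * (↑n * (l * A + (1 - l) * B) + ↑j * A + ↑(k + 1) * B + (Cρ + Cσ)) := by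
          have hl1 : (0:ℝ) ≤ 1 - l := by linarith
          exact add_le_add (mul_le_mul_of_nonneg_left ihX h0)
            (mul_le_mul_of_nonneg_left ihY hl1)
        refine le_trans h6 (le_trans hstep (le_of_eq ?_))
        push_cast
        ring
    -- conclude
    have hbound : ∀ n : ℕ, E (a ^ n) (b ^ n) (statePow μ n) ≤
        n * (l * A + (1 - l) * B) + (Cρ + Cσ) := by
      intro n
      have hK1 : stateKron (statePow ρ 0) (statePow σ 0) =
          (1 : Matrix (Fin (a ^ 0 * a ^ 0) × Fin (b ^ 0 * b ^ 0))
            (Fin (a ^ 0 * a ^ 0) × Fin (b ^ 0 * b ^ 0)) ℂ) := by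
        rw [statePow_zero_eq_one (a := a) (b := b), statePow_zero_eq_one (a := a) (b := b),
          stateKron, Matrix.one_kronecker_one, Matrix.reindex_apply,
          Matrix.submatrix_one_equiv]
      have hLE : LocEquiv (statePow μ n)
          (stateKron (statePow μ n) (stateKron (statePow ρ 0) (statePow σ 0))) := by
        rw [hK1]
        exact locEquiv_kron_one_right (by simp) (by simp) _
      have hk := key n 0 0
      rw [E_locEquiv E hinv (hμ.statePow n) hLE] at hk
      simpa using hk
    have hup : ∀ᶠ n : ℕ in Filter.atTop,
        E (a ^ n) (b ^ n) (statePow μ n) / n ≤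
          (l * A + (1 - l) * B) + (Cρ + Cσ) / n := by
      filter_upwards [Filter.eventually_ge_atTop 1] with n hn
      have hnpos : (0 : ℝ) < n := by
        have : 0 < n := hn
        exact_mod_cast this
      have hb := hbound n
      rw [div_le_iff₀ hnpos]
      have : ((l * A + (1 - l) * B) + (Cρ + Cσ) / ↑n) * ↑n =
          ↑n * (l * A + (1 - l) * B) + (Cρ + Cσ) := by
        field_simp
      rw [this]
      exact hb
    have hlim2 : Filter.Tendsto
        (fun n : ℕ => (l * A + (1 - l) * B) + (Cρ + Cσ) / n) Filter.atTop
        (nhds ((l * A + (1 - l) * B) + 0)) :=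
      tendsto_const_nhds.add (tendsto_const_div_atTop_nhds_zero_nat _)
    have hfin := le_of_tendsto_of_tendsto hμt hlim2 hup
    rw [add_zero] at hfin
    calc Lm ≤ l * A + (1 - l) * B := hfin
      _ = l * Lρ + (1 - l) * Lσ + ε := by rw [hAdef, hBdef]; ring
end
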